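/- arXiv:1307.3969 — 4 statements merged into one kernel-verified Lean document; each statement's English description precedes it below -/
import Mathlib

section
/- Let m ≥ 2, 0 ≤ s ≤ m, let I, J ⊆ ℝ be open intervals, and let z : I → ℝ^{m+1} and w : J → ℝ^{m+1} be three times continuously differentiable curves. Define L(x,y) = (z(x)+w(y))·tanh((x+y)/√2) − (z'(x)+w'(y))/√2 on I × J and assume, with the bilinear form of index s+1 on ℝ^{m+1}: (iii.1) ⟨L(x,y), L(x,y)⟩_{s+1} = −1 for all (x,y); (iii.2) √2·⟨z(x)+w(y), 2z'(x)−z'''(x)⟩_{s+1}·tanh((x+y)/√2) = ⟨z'(x)+w'(y), 2z'(x)−z'''(x)⟩_{s+1} for all (x,y); and (iii.3) √2·⟨z(x)+w(y), 2w'(y)−w'''(y)⟩_{s+1}·tanh((x+y)/√2) = ⟨z'(x)+w'(y), 2w'(y)−w'''(y)⟩_{s+1} for all (x,y). Then on I × J: ⟨∂L/∂x, ∂L/∂x⟩_{s+1} = 0, ⟨∂L/∂y, ∂L/∂y⟩_{s+1} = 0, ⟨∂L/∂x, ∂L/∂y⟩_{s+1} = −sech²((x+y)/√2), and ∂²L/∂x∂y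 = −sech²((x+y)/√2)·L. (This is the converse part of case (iii) of Theorem 6.1: such an L defines a minimal Lorentz surface of constant curvature −1 in the pseudo-hyperbolic space H^m_s(−1).) -/
noncomputable def pform (s n : ℕ) (u v : Fin n → ℝ) : ℝ :=
  ∑ i : Fin n, (if (i : ℕ) < s then -(u i * v i) else u i * v i)

noncomputable def pd1 {E : Type*} [NormedAddCommGroup E] [NormedSpace ℝ E]
    (L : ℝ → ℝ → E) (x y : ℝ) : E :=
  deriv (fun t => L t y) x

noncomputable def pd2 {E : Type*} [NormedAddCommGroup E] [NormedSpace ℝ E]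
    (L : ℝ → ℝ → E) (x y : ℝ) : E :=
  deriv (fun t => L x t) y

noncomputable def sech (t : ℝ) : ℝ := 1 / Real.cosh t

namespace Aux15

lemma pform_eq (s n : ℕ) (u v : Fin n → ℝ) :
    pform s n u v = ∑ i : Fin n, (if (i : ℕ) < s then (-1 : ℝ) else 1) * (u i * v i) := by
  unfold pform; apply Finset.sum_congr rfl; intro i _; split <;> ring

lemma pform_comm (s n : ℕ) (u v : Fin n → ℝ) : pform s n u v = pform s n v u := by
  unfold pform; apply Finset.sum_congr rfl; intro i _; split <;> ring

lemma pform_add_left (s n : ℕ) (u u' v : Fin n → ℝ) :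
    pform s n (u + u') v = pform s n u v + pform s n u' v := by
  unfold pform; rw [← Finset.sum_add_distrib]
  apply Finset.sum_congr rfl; intro i _; simp only [Pi.add_apply]; split <;> ring

lemma pform_sub_left (s n : ℕ) (u u' v : Fin n → ℝ) :
    pform s n (u - u') v = pform s n u v - pform s n u' v := by
  unfold pform; rw [← Finset.sum_sub_distrib]
  apply Finset.sum_congr rfl; intro i _; simp only [Pi.sub_apply]; split <;> ring

lemma pform_smul_left (s n : ℕ) (c : ℝ) (u v : Fin n → ℝ) :
    pform s n (c • u) v = c * pform s n u v := by
  unfold pform; rw [Finset.mul_sum]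
  apply Finset.sum_congr rfl; intro i _; simp only [Pi.smul_apply, smul_eq_mul]; split <;> ring

lemma pform_add_right (s n : ℕ) (u v v' : Fin n → ℝ) :
    pform s n u (v + v') = pform s n u v + pform s n u v' := by
  rw [pform_comm, pform_add_left, pform_comm s n v, pform_comm s n v']

lemma pform_sub_right (s n : ℕ) (u v v' : Fin n → ℝ) :
    pform s n u (v - v') = pform s n u v - pform s n u v' := by
  rw [pform_comm, pform_sub_left, pform_comm s n v, pform_comm s n v']

lemma pform_smul_right (s n : ℕ) (c : ℝ) (u v : Fin n → ℝ) :
    pform s n u (c • v) = c * pform s n u v := by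
  rw [pform_comm, pform_smul_left, pform_comm]

lemma hasDerivAt_pform {n s : ℕ} {f g : ℝ → Fin n → ℝ} {f' g' : Fin n → ℝ} {x : ℝ}
    (hf : HasDerivAt f f' x) (hg : HasDerivAt g g' x) :
    HasDerivAt (fun t => pform s n (f t) (g t))
      (pform s n f' (g x) + pform s n (f x) g') x := by
  have hf' := hasDerivAt_pi.1 hf
  have hg' := hasDerivAt_pi.1 hg
  have key : ∀ i : Fin n,
      HasDerivAt (fun t => (if (i : ℕ) < s then (-1 : ℝ) else 1) * (f t i * g t i))
        ((if (i : ℕ) < s then (-1 : ℝ) else 1) * (f' i * g x i + f x i * g' i)) x :=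
    fun i => ((hf' i).mul (hg' i)).const_mul _
  have hsum := HasDerivAt.fun_sum (fun i (_ : i ∈ Finset.univ) => key i)
  have e1 : (fun t => pform s n (f t) (g t))
      = fun t => ∑ i : Fin n, (if (i : ℕ) < s then (-1 : ℝ) else 1) * (f t i * g t i) :=
    funext fun t => pform_eq s n (f t) (g t)
  rw [e1]
  refine hsum.congr_deriv ?_
  rw [pform_eq, pform_eq, ← Finset.sum_add_distrib]
  apply Finset.sum_congr rfl; intro i _; ring

lemma hasDerivAt_tanh (t : ℝ) : HasDerivAt Real.tanh (1 - Real.tanh t ^ 2) t := by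
  have hc : Real.cosh t ≠ 0 := (Real.cosh_pos t).ne'
  have h := (Real.hasDerivAt_sinh t).div (Real.hasDerivAt_cosh t) hc
  have e : Real.tanh = fun t => Real.sinh t / Real.cosh t :=
    funext fun t => Real.tanh_eq_sinh_div_cosh t
  rw [e]
  refine h.congr_deriv ?_
  have h2 : Real.cosh t ^ 2 - Real.sinh t ^ 2 = 1 := Real.cosh_sq_sub_sinh_sq t
  beta_reduce
  field_simp

lemma sech_sq (t : ℝ) : sech t ^ 2 = 1 - Real.tanh t ^ 2 := by
  have hc : Real.cosh t ≠ 0 := (Real.cosh_pos t).ne'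
  have h2 : Real.cosh t ^ 2 - Real.sinh t ^ 2 = 1 := Real.cosh_sq_sub_sinh_sq t
  rw [sech, Real.tanh_eq_sinh_div_cosh]
  field_simp
  try nlinarith [h2]

lemma sqrt2_mul_inv : (Real.sqrt 2)⁻¹ * Real.sqrt 2 = 1 := by
  rw [inv_mul_cancel₀ (by positivity : Real.sqrt 2 ≠ 0)]

lemma inv_sq2 : (Real.sqrt 2)⁻¹ * (Real.sqrt 2)⁻¹ * 2 = 1 := by
  rw [← mul_inv]
  rw [Real.mul_self_sqrt (by norm_num : (2:ℝ) ≥ 0)]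
  norm_num

lemma helperA {n : ℕ} {F H : ℝ → Fin n → ℝ} {F' H' : Fin n → ℝ} {φ : ℝ → ℝ} {a : ℝ}
    (hφ : HasDerivAt φ (Real.sqrt 2)⁻¹ a) (hF : HasDerivAt F F' a) (hH : HasDerivAt H H' a) :
    HasDerivAt (fun t => Real.tanh (φ t) • F t - (Real.sqrt 2)⁻¹ • H t)
      (((Real.sqrt 2)⁻¹ * (1 - Real.tanh (φ a) ^ 2)) • F a + Real.tanh (φ a) • F'
        - (Real.sqrt 2)⁻¹ • H') a := by
  have htan : HasDerivAt (fun t => Real.tanh (φ t)) ((1 - Real.tanh (φ a) ^ 2) * (Real.sqrt 2)⁻¹) a :=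
    (hasDerivAt_tanh (φ a)).comp a hφ
  have h := (htan.smul hF).sub (hH.const_smul ((Real.sqrt 2)⁻¹ : ℝ))
  refine h.congr_deriv ?_
  ext i
  simp only [Pi.add_apply, Pi.sub_apply, Pi.smul_apply, smul_eq_mul]
  ring

lemma helperB {n : ℕ} {F G H : ℝ → Fin n → ℝ} {F' G' H' : Fin n → ℝ} {φ : ℝ → ℝ} {a : ℝ}
    (hφ : HasDerivAt φ (Real.sqrt 2)⁻¹ a) (hF : HasDerivAt F F' a) (hG : HasDerivAt G G' a)
    (hH : HasDerivAt H H' a) :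
    HasDerivAt (fun t => ((Real.sqrt 2)⁻¹ * (1 - Real.tanh (φ t) ^ 2)) • F t
        + Real.tanh (φ t) • G t - (Real.sqrt 2)⁻¹ • H t)
      ((-(Real.tanh (φ a)) * (1 - Real.tanh (φ a) ^ 2)) • F a
        + ((Real.sqrt 2)⁻¹ * (1 - Real.tanh (φ a) ^ 2)) • F'
        + ((Real.sqrt 2)⁻¹ * (1 - Real.tanh (φ a) ^ 2)) • G a + Real.tanh (φ a) • G'
        - (Real.sqrt 2)⁻¹ • H') a := by
  have htan : HasDerivAt (fun t => Real.tanh (φ t)) ((1 - Real.tanh (φ a) ^ 2) * (Real.sqrt 2)⁻¹) a :=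
    (hasDerivAt_tanh (φ a)).comp a hφ
  have hS : HasDerivAt (fun t => (Real.sqrt 2)⁻¹ * (1 - Real.tanh (φ t) ^ 2))
      ((Real.sqrt 2)⁻¹ * (-(2 * Real.tanh (φ a) ^ 1 * ((1 - Real.tanh (φ a) ^ 2) * (Real.sqrt 2)⁻¹)))) a :=
    ((htan.pow 2).const_sub 1).const_mul _
  have h := ((hS.smul hF).add (htan.smul hG)).sub (hH.const_smul ((Real.sqrt 2)⁻¹ : ℝ))
  refine h.congr_deriv ?_
  have h2 : (Real.sqrt 2)⁻¹ * (Real.sqrt 2)⁻¹ * 2 = 1 := inv_sq2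
  ext i
  simp only [Pi.add_apply, Pi.sub_apply, Pi.smul_apply, smul_eq_mul, pow_one]
  linear_combination (-(Real.tanh (φ a) * (1 - Real.tanh (φ a) ^ 2) * F a i)) * h2

end Aux15

noncomputable def LXv (m : ℕ) (z w : ℝ → Fin (m + 1) → ℝ) (a b : ℝ) : Fin (m + 1) → ℝ :=
  ((Real.sqrt 2)⁻¹ * (1 - Real.tanh ((a + b) / Real.sqrt 2) ^ 2)) • (z a + w b)
    + Real.tanh ((a + b) / Real.sqrt 2) • deriv z a - (Real.sqrt 2)⁻¹ • deriv (deriv z) a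

noncomputable def LYv (m : ℕ) (z w : ℝ → Fin (m + 1) → ℝ) (a b : ℝ) : Fin (m + 1) → ℝ :=
  ((Real.sqrt 2)⁻¹ * (1 - Real.tanh ((a + b) / Real.sqrt 2) ^ 2)) • (z a + w b)
    + Real.tanh ((a + b) / Real.sqrt 2) • deriv w b - (Real.sqrt 2)⁻¹ • deriv (deriv w) b

noncomputable def LXXv (m : ℕ) (z w : ℝ → Fin (m + 1) → ℝ) (a b : ℝ) : Fin (m + 1) → ℝ :=
  (-(Real.tanh ((a + b) / Real.sqrt 2)) * (1 - Real.tanh ((a + b) / Real.sqrt 2) ^ 2)) • (z a + w b)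
    + ((Real.sqrt 2)⁻¹ * (1 - Real.tanh ((a + b) / Real.sqrt 2) ^ 2)) • deriv z a
    + ((Real.sqrt 2)⁻¹ * (1 - Real.tanh ((a + b) / Real.sqrt 2) ^ 2)) • deriv z a
    + Real.tanh ((a + b) / Real.sqrt 2) • deriv (deriv z) a
    - (Real.sqrt 2)⁻¹ • deriv (deriv (deriv z)) a

noncomputable def LYYv (m : ℕ) (z w : ℝ → Fin (m + 1) → ℝ) (a b : ℝ) : Fin (m + 1) → ℝ :=
  (-(Real.tanh ((a + b) / Real.sqrt 2)) * (1 - Real.tanh ((a + b) / Real.sqrt 2) ^ 2)) • (z a + w b)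
    + ((Real.sqrt 2)⁻¹ * (1 - Real.tanh ((a + b) / Real.sqrt 2) ^ 2)) • deriv w b
    + ((Real.sqrt 2)⁻¹ * (1 - Real.tanh ((a + b) / Real.sqrt 2) ^ 2)) • deriv w b
    + Real.tanh ((a + b) / Real.sqrt 2) • deriv (deriv w) b
    - (Real.sqrt 2)⁻¹ • deriv (deriv (deriv w)) b

noncomputable def LXYv (m : ℕ) (z w : ℝ → Fin (m + 1) → ℝ) (a b : ℝ) : Fin (m + 1) → ℝ :=
  (-(Real.tanh ((a + b) / Real.sqrt 2)) * (1 - Real.tanh ((a + b) / Real.sqrt 2) ^ 2)) • (z a + w b)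
    + ((Real.sqrt 2)⁻¹ * (1 - Real.tanh ((a + b) / Real.sqrt 2) ^ 2)) • (deriv z a + deriv w b)

theorem stmt_15 (m s : ℕ) (hm : 2 ≤ m) (hs : s ≤ m) (I J : Set ℝ)
    (hIo : IsOpen I) (hIc : I.OrdConnected) (hJo : IsOpen J) (hJc : J.OrdConnected)
    (z w : ℝ → Fin (m + 1) → ℝ) (hz : ContDiffOn ℝ 3 z I) (hw : ContDiffOn ℝ 3 w J)
    (L : ℝ → ℝ → Fin (m + 1) → ℝ)
    (hLdef : ∀ x y : ℝ,
      L x y = Real.tanh ((x + y) / Real.sqrt 2) • (z x + w y) -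
        (Real.sqrt 2)⁻¹ • (deriv z x + deriv w y))
    (h1 : ∀ x ∈ I, ∀ y ∈ J, pform (s + 1) (m + 1) (L x y) (L x y) = -1)
    (h2 : ∀ x ∈ I, ∀ y ∈ J,
      Real.sqrt 2 * pform (s + 1) (m + 1) (z x + w y)
          ((2 : ℝ) • deriv z x - deriv (deriv (deriv z)) x) *
        Real.tanh ((x + y) / Real.sqrt 2) =
      pform (s + 1) (m + 1) (deriv z x + deriv w y)
        ((2 : ℝ) • deriv z x - deriv (deriv (deriv z)) x))
    (h3 : ∀ x ∈ I, ∀ y ∈ J,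
      Real.sqrt 2 * pform (s + 1) (m + 1) (z x + w y)
          ((2 : ℝ) • deriv w y - deriv (deriv (deriv w)) y) *
        Real.tanh ((x + y) / Real.sqrt 2) =
      pform (s + 1) (m + 1) (deriv z x + deriv w y)
        ((2 : ℝ) • deriv w y - deriv (deriv (deriv w)) y)) :
    ∀ x ∈ I, ∀ y ∈ J,
      pform (s + 1) (m + 1) (pd1 L x y) (pd1 L x y) = 0 ∧
      pform (s + 1) (m + 1) (pd2 L x y) (pd2 L x y) = 0 ∧
      pform (s + 1) (m + 1) (pd1 L x y) (pd2 L x y) = -(sech ((x + y) / Real.sqrt 2)) ^ 2 ∧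
      pd1 (pd2 L) x y = (-(sech ((x + y) / Real.sqrt 2)) ^ 2) • L x y := by
  have hφ1 : ∀ b a : ℝ, HasDerivAt (fun t => (t + b) / Real.sqrt 2) (Real.sqrt 2)⁻¹ a := by
    intro b a
    simpa [one_div] using ((hasDerivAt_id a).add_const b).div_const (Real.sqrt 2)
  have hφ2 : ∀ a b : ℝ, HasDerivAt (fun t => (a + t) / Real.sqrt 2) (Real.sqrt 2)⁻¹ b := by
    intro a b
    simpa [one_div] using ((hasDerivAt_id b).const_add a).div_const (Real.sqrt 2)
  have hz' : ContDiffOn ℝ 2 (deriv z) I := hz.deriv_of_isOpen hIo (by norm_num)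
  have hz'' : ContDiffOn ℝ 1 (deriv (deriv z)) I := hz'.deriv_of_isOpen hIo (by norm_num)
  have hw' : ContDiffOn ℝ 2 (deriv w) J := hw.deriv_of_isOpen hJo (by norm_num)
  have hw'' : ContDiffOn ℝ 1 (deriv (deriv w)) J := hw'.deriv_of_isOpen hJo (by norm_num)
  have hzd : ∀ a ∈ I, HasDerivAt z (deriv z a) a := fun a ha =>
    ((hz.contDiffAt (hIo.mem_nhds ha)).differentiableAt (by norm_num)).hasDerivAt
  have hzd1 : ∀ a ∈ I, HasDerivAt (deriv z) (deriv (deriv z) a) a := fun a ha =>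
    ((hz'.contDiffAt (hIo.mem_nhds ha)).differentiableAt (by norm_num)).hasDerivAt
  have hzd2 : ∀ a ∈ I, HasDerivAt (deriv (deriv z)) (deriv (deriv (deriv z)) a) a := fun a ha =>
    ((hz''.contDiffAt (hIo.mem_nhds ha)).differentiableAt (by norm_num)).hasDerivAt
  have hwd : ∀ b ∈ J, HasDerivAt w (deriv w b) b := fun b hb =>
    ((hw.contDiffAt (hJo.mem_nhds hb)).differentiableAt (by norm_num)).hasDerivAt
  have hwd1 : ∀ b ∈ J, HasDerivAt (deriv w) (deriv (deriv w) b) b := fun b hb =>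
    ((hw'.contDiffAt (hJo.mem_nhds hb)).differentiableAt (by norm_num)).hasDerivAt
  have hwd2 : ∀ b ∈ J, HasDerivAt (deriv (deriv w)) (deriv (deriv (deriv w)) b) b := fun b hb =>
    ((hw''.contDiffAt (hJo.mem_nhds hb)).differentiableAt (by norm_num)).hasDerivAt
  -- first-order closed forms
  have hd1 : ∀ a ∈ I, ∀ b : ℝ, HasDerivAt (fun t => L t b) (LXv m z w a b) a := by
    intro a ha b
    have e : (fun t => L t b) = fun t =>
        Real.tanh ((t + b) / Real.sqrt 2) • (z t + w b)
          - (Real.sqrt 2)⁻¹ • (deriv z t + deriv w b) := funext fun t => hLdef t b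
    rw [e]
    exact Aux15.helperA (hφ1 b a) ((hzd a ha).add_const (w b)) ((hzd1 a ha).add_const (deriv w b))
  have hd2 : ∀ b ∈ J, ∀ a : ℝ, HasDerivAt (fun t => L a t) (LYv m z w a b) b := by
    intro b hb a
    have e : (fun t => L a t) = fun t =>
        Real.tanh ((a + t) / Real.sqrt 2) • (z a + w t)
          - (Real.sqrt 2)⁻¹ • (deriv z a + deriv w t) := funext fun t => hLdef a t
    rw [e]
    exact Aux15.helperA (hφ2 a b) ((hwd b hb).const_add (z a)) ((hwd1 b hb).const_add (deriv z a))
  have hpd1 : ∀ a ∈ I, ∀ b : ℝ, pd1 L a b = LXv m z w a b := fun a ha b => (hd1 a ha b).deriv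
  have hpd2 : ∀ b ∈ J, ∀ a : ℝ, pd2 L a b = LYv m z w a b := fun b hb a => (hd2 b hb a).deriv
  -- second-order closed forms
  have hdXX : ∀ a ∈ I, ∀ b : ℝ, HasDerivAt (fun t => LXv m z w t b) (LXXv m z w a b) a := by
    intro a ha b
    exact Aux15.helperB (hφ1 b a) ((hzd a ha).add_const (w b)) (hzd1 a ha) (hzd2 a ha)
  have hdYY : ∀ b ∈ J, ∀ a : ℝ, HasDerivAt (fun t => LYv m z w a t) (LYYv m z w a b) b := by
    intro b hb a
    exact Aux15.helperB (hφ2 a b) ((hwd b hb).const_add (z a)) (hwd1 b hb) (hwd2 b hb)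
  have hdXY1 : ∀ a ∈ I, ∀ b : ℝ, HasDerivAt (fun t => LYv m z w t b) (LXYv m z w a b) a := by
    intro a ha b
    have h := Aux15.helperB (hφ1 b a) ((hzd a ha).add_const (w b))
      (hasDerivAt_const a (deriv w b)) (hasDerivAt_const a (deriv (deriv w) b))
    refine h.congr_deriv ?_
    ext i
    simp only [LXYv, Pi.add_apply, Pi.sub_apply, Pi.smul_apply, smul_eq_mul, Pi.zero_apply,
      mul_zero, smul_zero]
    ring
  have hdXY2 : ∀ b ∈ J, ∀ a : ℝ, HasDerivAt (fun t => LXv m z w a t) (LXYv m z w a b) b := by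
    intro b hb a
    have h := Aux15.helperB (hφ2 a b) ((hwd b hb).const_add (z a))
      (hasDerivAt_const b (deriv z a)) (hasDerivAt_const b (deriv (deriv z) a))
    refine h.congr_deriv ?_
    ext i
    simp only [LXYv, Pi.add_apply, Pi.sub_apply, Pi.smul_apply, smul_eq_mul, Pi.zero_apply,
      mul_zero, smul_zero]
    ring
  -- first scalar identities
  have hE1 : ∀ a ∈ I, ∀ b ∈ J,
      pform (s + 1) (m + 1) (LXv m z w a b) (L a b) = 0 := by
    intro a ha b hb
    have hder := Aux15.hasDerivAt_pform (s := s + 1) (hd1 a ha b) (hd1 a ha b)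
    have hev : (fun t => pform (s + 1) (m + 1) (L t b) (L t b)) =ᶠ[nhds a]
        (fun _ => (-1 : ℝ)) := by
      filter_upwards [hIo.mem_nhds ha] with t ht
      exact h1 t ht b hb
    have h0 : deriv (fun t => pform (s + 1) (m + 1) (L t b) (L t b)) a = 0 := by
      rw [hev.deriv_eq]; simp
    rw [hder.deriv] at h0
    have hc := Aux15.pform_comm (s + 1) (m + 1) (L a b) (LXv m z w a b)
    linarith
  have hE2 : ∀ a ∈ I, ∀ b ∈ J,
      pform (s + 1) (m + 1) (LYv m z w a b) (L a b) = 0 := by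
    intro a ha b hb
    have hder := Aux15.hasDerivAt_pform (s := s + 1) (hd2 b hb a) (hd2 b hb a)
    have hev : (fun t => pform (s + 1) (m + 1) (L a t) (L a t)) =ᶠ[nhds b]
        (fun _ => (-1 : ℝ)) := by
      filter_upwards [hJo.mem_nhds hb] with t ht
      exact h1 a ha t ht
    have h0 : deriv (fun t => pform (s + 1) (m + 1) (L a t) (L a t)) b = 0 := by
      rw [hev.deriv_eq]; simp
    rw [hder.deriv] at h0
    have hc := Aux15.pform_comm (s + 1) (m + 1) (L a b) (LYv m z w a b)
    linarith
  intro x hx y hy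
  have hc1 : (Real.sqrt 2)⁻¹ * Real.sqrt 2 = 1 := Aux15.sqrt2_mul_inv
  have hc2 : (Real.sqrt 2)⁻¹ * (Real.sqrt 2)⁻¹ * 2 = 1 := Aux15.inv_sq2
  -- second scalar identities at (x, y)
  have hE3 : pform (s + 1) (m + 1) (LXYv m z w x y) (L x y)
      + pform (s + 1) (m + 1) (LXv m z w x y) (LYv m z w x y) = 0 := by
    have hder := Aux15.hasDerivAt_pform (s := s + 1) (hdXY2 y hy x) (hd2 y hy x)
    have hev : (fun t => pform (s + 1) (m + 1) (LXv m z w x t) (L x t)) =ᶠ[nhds y]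
        (fun _ => (0 : ℝ)) := by
      filter_upwards [hJo.mem_nhds hy] with t ht
      exact hE1 x hx t ht
    have h0 : deriv (fun t => pform (s + 1) (m + 1) (LXv m z w x t) (L x t)) y = 0 := by
      rw [hev.deriv_eq]; simp
    rw [hder.deriv] at h0
    exact h0
  have hE4 : pform (s + 1) (m + 1) (LXXv m z w x y) (L x y)
      + pform (s + 1) (m + 1) (LXv m z w x y) (LXv m z w x y) = 0 := by
    have hder := Aux15.hasDerivAt_pform (s := s + 1) (hdXX x hx y) (hd1 x hx y)
    have hev : (fun t => pform (s + 1) (m + 1) (LXv m z w t y) (L t y)) =ᶠ[nhds x]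
        (fun _ => (0 : ℝ)) := by
      filter_upwards [hIo.mem_nhds hx] with t ht
      exact hE1 t ht y hy
    have h0 : deriv (fun t => pform (s + 1) (m + 1) (LXv m z w t y) (L t y)) x = 0 := by
      rw [hev.deriv_eq]; simp
    rw [hder.deriv] at h0
    exact h0
  have hE5 : pform (s + 1) (m + 1) (LYYv m z w x y) (L x y)
      + pform (s + 1) (m + 1) (LYv m z w x y) (LYv m z w x y) = 0 := by
    have hder := Aux15.hasDerivAt_pform (s := s + 1) (hdYY y hy x) (hd2 y hy x)
    have hev : (fun t => pform (s + 1) (m + 1) (LYv m z w x t) (L x t)) =ᶠ[nhds y]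
        (fun _ => (0 : ℝ)) := by
      filter_upwards [hJo.mem_nhds hy] with t ht
      exact hE2 x hx t ht
    have h0 : deriv (fun t => pform (s + 1) (m + 1) (LYv m z w x t) (L x t)) y = 0 := by
      rw [hev.deriv_eq]; simp
    rw [hder.deriv] at h0
    exact h0
  -- hypothesis h2 in the useful form
  have h2a : pform (s + 1) (m + 1) (L x y)
      ((2 : ℝ) • deriv z x - deriv (deriv (deriv z)) x) = 0 := by
    have h2' := h2 x hx y hy
    rw [hLdef x y]
    simp only [Aux15.pform_sub_left, Aux15.pform_smul_left, Aux15.pform_add_left] at h2' ⊢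
    linear_combination (Real.sqrt 2)⁻¹ * h2' -
      ((pform (s + 1) (m + 1) (z x) ((2 : ℝ) • deriv z x - deriv (deriv (deriv z)) x) +
        pform (s + 1) (m + 1) (w y) ((2 : ℝ) • deriv z x - deriv (deriv (deriv z)) x)) *
        Real.tanh ((x + y) / Real.sqrt 2)) * hc1
  have h2b : pform (s + 1) (m + 1) (deriv (deriv (deriv z)) x) (L x y)
      = 2 * pform (s + 1) (m + 1) (deriv z x) (L x y) := by
    rw [Aux15.pform_sub_right, Aux15.pform_smul_right] at h2a
    rw [Aux15.pform_comm (s + 1) (m + 1) (L x y) (deriv z x)] at h2a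
    rw [Aux15.pform_comm (s + 1) (m + 1) (L x y) (deriv (deriv (deriv z)) x)] at h2a
    linarith
  have h3a : pform (s + 1) (m + 1) (L x y)
      ((2 : ℝ) • deriv w y - deriv (deriv (deriv w)) y) = 0 := by
    have h3' := h3 x hx y hy
    rw [hLdef x y]
    simp only [Aux15.pform_sub_left, Aux15.pform_smul_left, Aux15.pform_add_left] at h3' ⊢
    linear_combination (Real.sqrt 2)⁻¹ * h3' -
      ((pform (s + 1) (m + 1) (z x) ((2 : ℝ) • deriv w y - deriv (deriv (deriv w)) y) +
        pform (s + 1) (m + 1) (w y) ((2 : ℝ) • deriv w y - deriv (deriv (deriv w)) y)) *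
        Real.tanh ((x + y) / Real.sqrt 2)) * hc1
  have h3b : pform (s + 1) (m + 1) (deriv (deriv (deriv w)) y) (L x y)
      = 2 * pform (s + 1) (m + 1) (deriv w y) (L x y) := by
    rw [Aux15.pform_sub_right, Aux15.pform_smul_right] at h3a
    rw [Aux15.pform_comm (s + 1) (m + 1) (L x y) (deriv w y)] at h3a
    rw [Aux15.pform_comm (s + 1) (m + 1) (L x y) (deriv (deriv (deriv w)) y)] at h3a
    linarith
  -- expanded first scalar identity at (x, y)
  have hE1' := hE1 x hx y hy
  have hE2' := hE2 x hx y hy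
  simp only [LXv, Aux15.pform_sub_left, Aux15.pform_add_left, Aux15.pform_smul_left] at hE1'
  simp only [LYv, Aux15.pform_sub_left, Aux15.pform_add_left, Aux15.pform_smul_left] at hE2'
  -- key vanishing: ⟪L_xx, L⟫ = 0
  have hXXL : pform (s + 1) (m + 1) (LXXv m z w x y) (L x y) = 0 := by
    simp only [LXXv, Aux15.pform_sub_left, Aux15.pform_add_left, Aux15.pform_smul_left]
    linear_combination (-2 * (Real.sqrt 2)⁻¹ * Real.tanh ((x + y) / Real.sqrt 2)) * hE1'
      + (-(Real.sqrt 2)⁻¹) * h2b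
      + (Real.tanh ((x + y) / Real.sqrt 2) * (1 - Real.tanh ((x + y) / Real.sqrt 2) ^ 2) *
          (pform (s + 1) (m + 1) (z x) (L x y) + pform (s + 1) (m + 1) (w y) (L x y))
        - Real.tanh ((x + y) / Real.sqrt 2) *
          pform (s + 1) (m + 1) (deriv (deriv z) x) (L x y)) * hc2
  have hYYL : pform (s + 1) (m + 1) (LYYv m z w x y) (L x y) = 0 := by
    simp only [LYYv, Aux15.pform_sub_left, Aux15.pform_add_left, Aux15.pform_smul_left]
    linear_combination (-2 * (Real.sqrt 2)⁻¹ * Real.tanh ((x + y) / Real.sqrt 2)) * hE2'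
      + (-(Real.sqrt 2)⁻¹) * h3b
      + (Real.tanh ((x + y) / Real.sqrt 2) * (1 - Real.tanh ((x + y) / Real.sqrt 2) ^ 2) *
          (pform (s + 1) (m + 1) (z x) (L x y) + pform (s + 1) (m + 1) (w y) (L x y))
        - Real.tanh ((x + y) / Real.sqrt 2) *
          pform (s + 1) (m + 1) (deriv (deriv w) y) (L x y)) * hc2
  -- L_xy = -(sech²) L
  have hXYL : LXYv m z w x y
      = (-(1 - Real.tanh ((x + y) / Real.sqrt 2) ^ 2)) • L x y := by
    rw [hLdef x y]
    ext i
    simp only [LXYv, Pi.add_apply, Pi.sub_apply, Pi.smul_apply, smul_eq_mul]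
    ring
  have hsech : sech ((x + y) / Real.sqrt 2) ^ 2
      = 1 - Real.tanh ((x + y) / Real.sqrt 2) ^ 2 := Aux15.sech_sq _
  refine ⟨?_, ?_, ?_, ?_⟩
  · rw [hpd1 x hx y]
    linarith [hE4, hXXL]
  · rw [hpd2 y hy x]
    linarith [hE5, hYYL]
  · rw [hpd1 x hx y, hpd2 y hy x]
    have hXYLp : pform (s + 1) (m + 1) (LXYv m z w x y) (L x y)
        = 1 - Real.tanh ((x + y) / Real.sqrt 2) ^ 2 := by
      rw [hXYL, Aux15.pform_smul_left, h1 x hx y hy]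
      ring
    rw [← hsech] at hXYLp
    linarith [hE3, hXYLp]
  · have e4 : pd1 (pd2 L) x y = LXYv m z w x y := by
      have e : (fun t => pd2 L t y) = fun t => LYv m z w t y := funext fun t => hpd2 y hy t
      show deriv (fun t => pd2 L t y) x = _
      rw [e]
      exact (hdXY1 x hx y).deriv
    rw [e4, hXYL, hsech]
end

section
/- Let m ≥ 2, 0 ≤ s ≤ m, let I, J ⊆ ℝ be open intervals, and let z : I → ℝ^{m+1} and w : J → ℝ^{m+1} be three times continuously differentiable curves. Define L(x,y) = (z(x)+w(y))·tanh((x+y)/√2) − (z'(x)+w'(y))/√2 and suppose that on I × J, with the bilinear form of index s+1 on ℝ^{m+1}: ⟨L, L⟩_{s+1} = −1, ⟨∂L/∂x, ∂L/∂x⟩_{s+1} = 0, and ⟨∂L/∂y, ∂L/∂y⟩_{s+1} = 0. Then the conditions (iii.2): √2·⟨z(x)+w(y), 2z'(x)−z'''(x)⟩_{s+1}·tanh((x+y)/√2) = ⟨z'(x)+w'(y), 2z'(x)−z'''(x)⟩_{s+1}, and (iii.3): √2·⟨z(x)+w(y), 2w'(y)−w'''(y)⟩_{s+1}·tanh((x+y)/√2)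 = ⟨z'(x)+w'(y), 2w'(y)−w'''(y)⟩_{s+1}, hold for all (x,y) ∈ I × J; moreover ⟨∂L/∂x, ∂L/∂y⟩_{s+1} = −sech²((x+y)/√2) on I × J. -/
/-! ### Auxiliary lemmas -/

lemma pform_comm (s n : ℕ) (u v : Fin n → ℝ) : pform s n u v = pform s n v u := by
  unfold pform; exact Finset.sum_congr rfl fun i _ => by split <;> ring

lemma pform_add_left (s n : ℕ) (u v r : Fin n → ℝ) :
    pform s n (u + v) r = pform s n u r + pform s n v r := by
  unfold pform; rw [← Finset.sum_add_distrib]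
  exact Finset.sum_congr rfl fun i _ => by
    by_cases h : (i : ℕ) < s <;> simp only [h, if_true, if_false, Pi.add_apply] <;> ring

lemma pform_sub_left (s n : ℕ) (u v r : Fin n → ℝ) :
    pform s n (u - v) r = pform s n u r - pform s n v r := by
  unfold pform; rw [← Finset.sum_sub_distrib]
  exact Finset.sum_congr rfl fun i _ => by
    by_cases h : (i : ℕ) < s <;> simp only [h, if_true, if_false, Pi.sub_apply] <;> ring

lemma pform_smul_left (s n : ℕ) (a : ℝ) (u r : Fin n → ℝ) :
    pform s n (a • u) r = a * pform s n u r := by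
  unfold pform; rw [Finset.mul_sum]
  exact Finset.sum_congr rfl fun i _ => by
    by_cases h : (i : ℕ) < s <;>
      simp only [h, if_true, if_false, Pi.smul_apply, smul_eq_mul] <;> ring

lemma one_sub_tanh_sq (u : ℝ) : 1 - Real.tanh u ^ 2 = (1 / Real.cosh u) ^ 2 := by
  have hc := (Real.cosh_pos u).ne'
  rw [Real.tanh_eq_sinh_div_cosh]
  field_simp
  linarith [Real.cosh_sq_sub_sinh_sq u]

lemma hasDerivAt_tanh (u : ℝ) : HasDerivAt Real.tanh (1 - Real.tanh u ^ 2) u := by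
  have hc := (Real.cosh_pos u).ne'
  have h := (Real.hasDerivAt_sinh u).div (Real.hasDerivAt_cosh u) hc
  have he : (Real.sinh / Real.cosh) = Real.tanh := by
    funext x; rw [Pi.div_apply, Real.tanh_eq_sinh_div_cosh]
  rw [he] at h
  refine h.congr_deriv (Eq.symm ?_)
  rw [Real.tanh_eq_sinh_div_cosh]
  field_simp

lemma sqrt2_inv_sq : (Real.sqrt 2)⁻¹ * (Real.sqrt 2)⁻¹ = 1 / 2 := by
  rw [← mul_inv, Real.mul_self_sqrt (by norm_num)]
  norm_num

lemma pform_hasDerivAt (s : ℕ) {n : ℕ} {f g : ℝ → Fin n → ℝ} {f' g' : Fin n → ℝ} {x : ℝ}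
    (hf : HasDerivAt f f' x) (hg : HasDerivAt g g' x) :
    HasDerivAt (fun u => pform s n (f u) (g u))
      (pform s n f' (g x) + pform s n (f x) g') x := by
  have hfi := hasDerivAt_pi.1 hf
  have hgi := hasDerivAt_pi.1 hg
  have key : ∀ i : Fin n, HasDerivAt
      (fun u => (if (i : ℕ) < s then -(f u i * g u i) else f u i * g u i))
      (if (i : ℕ) < s then -(f' i * g x i + f x i * g' i)
        else f' i * g x i + f x i * g' i) x := by
    intro i
    by_cases h : (i : ℕ) < s <;> simp only [h, if_true, if_false]
    · exact ((hfi i).mul (hgi i)).neg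
    · exact (hfi i).mul (hgi i)
  have h := HasDerivAt.fun_sum (fun i (_ : i ∈ Finset.univ) => key i)
  have e2 : pform s n f' (g x) + pform s n (f x) g' =
      ∑ i : Fin n, (if (i : ℕ) < s then -(f' i * g x i + f x i * g' i)
        else f' i * g x i + f x i * g' i) := by
    unfold pform; rw [← Finset.sum_add_distrib]
    exact Finset.sum_congr rfl fun i _ => by split <;> ring
  rw [e2]
  exact h

noncomputable def LXf {n : ℕ} (z : ℝ → Fin n → ℝ) (W : Fin n → ℝ) (y x : ℝ) : Fin n → ℝ :=
  ((Real.sqrt 2)⁻¹ * (1 - Real.tanh ((x + y) / Real.sqrt 2) ^ 2)) • (z x + W) +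
    Real.tanh ((x + y) / Real.sqrt 2) • deriv z x - (Real.sqrt 2)⁻¹ • deriv (deriv z) x

noncomputable def LXXf {n : ℕ} (z : ℝ → Fin n → ℝ) (W : Fin n → ℝ) (y x : ℝ) : Fin n → ℝ :=
  (-((1 - Real.tanh ((x + y) / Real.sqrt 2) ^ 2) * Real.tanh ((x + y) / Real.sqrt 2))) •
      (z x + W) +
    (2 * (Real.sqrt 2)⁻¹ * (1 - Real.tanh ((x + y) / Real.sqrt 2) ^ 2)) • deriv z x +
    Real.tanh ((x + y) / Real.sqrt 2) • deriv (deriv z) x -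
    (Real.sqrt 2)⁻¹ • deriv (deriv (deriv z)) x

lemma hasDerivAt_Q (y u : ℝ) :
    HasDerivAt (fun v => Real.tanh ((v + y) / Real.sqrt 2))
      ((1 - Real.tanh ((u + y) / Real.sqrt 2) ^ 2) * (Real.sqrt 2)⁻¹) u := by
  have hinner : HasDerivAt (fun v : ℝ => (v + y) / Real.sqrt 2) ((Real.sqrt 2)⁻¹) u := by
    simpa [one_div] using ((hasDerivAt_id u).add_const y).div_const (Real.sqrt 2)
  have h := (hasDerivAt_tanh ((u + y) / Real.sqrt 2)).comp u hinner
  exact h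

lemma hd3 {n : ℕ} {I : Set ℝ} (hIo : IsOpen I) {z : ℝ → Fin n → ℝ}
    (hz : ContDiffOn ℝ 3 z I) {x : ℝ} (hx : x ∈ I) :
    HasDerivAt z (deriv z x) x ∧ HasDerivAt (deriv z) (deriv (deriv z) x) x ∧
      HasDerivAt (deriv (deriv z)) (deriv (deriv (deriv z)) x) x := by
  have hz1 : ContDiffOn ℝ 2 (deriv z) I := hz.deriv_of_isOpen hIo (by norm_num)
  have hz2 : ContDiffOn ℝ 1 (deriv (deriv z)) I := hz1.deriv_of_isOpen hIo (by norm_num)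
  refine ⟨?_, ?_, ?_⟩
  · exact ((hz.differentiableOn (by norm_num)).differentiableAt (hIo.mem_nhds hx)).hasDerivAt
  · exact ((hz1.differentiableOn (by norm_num)).differentiableAt (hIo.mem_nhds hx)).hasDerivAt
  · exact ((hz2.differentiableOn (by norm_num)).differentiableAt (hIo.mem_nhds hx)).hasDerivAt

lemma hasDerivAt_Lfun {n : ℕ} (z : ℝ → Fin n → ℝ) (W W1 : Fin n → ℝ) (y : ℝ)
    (L : ℝ → Fin n → ℝ)
    (hLdef : ∀ x, L x = Real.tanh ((x + y) / Real.sqrt 2) • (z x + W) -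
      (Real.sqrt 2)⁻¹ • (deriv z x + W1))
    {u : ℝ} (h1 : HasDerivAt z (deriv z u) u)
    (h2 : HasDerivAt (deriv z) (deriv (deriv z) u) u) :
    HasDerivAt L (LXf z W y u) u := by
  have hQ := hasDerivAt_Q y u
  have hzW : HasDerivAt (fun v => z v + W) (deriv z u) u := h1.add_const W
  have hzw1 : HasDerivAt (fun v => (Real.sqrt 2)⁻¹ • (deriv z v + W1))
      ((Real.sqrt 2)⁻¹ • deriv (deriv z) u) u := by
    have := (h2.add_const W1).const_smul ((Real.sqrt 2)⁻¹); exact this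
  have hmain := (hQ.smul hzW).sub hzw1
  have hfun : (fun v => Real.tanh ((v + y) / Real.sqrt 2) • (z v + W) -
      (Real.sqrt 2)⁻¹ • (deriv z v + W1)) = L := by funext v; rw [hLdef v]
  have hmain : HasDerivAt L (Real.tanh ((u + y) / Real.sqrt 2) • deriv z u +
      ((1 - Real.tanh ((u + y) / Real.sqrt 2) ^ 2) * (Real.sqrt 2)⁻¹) • (z u + W) -
      (Real.sqrt 2)⁻¹ • deriv (deriv z) u) u := by rw [← hfun]; exact hmain
  convert hmain using 1
  funext i
  simp only [LXf, Pi.add_apply, Pi.sub_apply, Pi.smul_apply, smul_eq_mul]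
  ring

lemma hasDerivAt_LXf {n : ℕ} (z : ℝ → Fin n → ℝ) (W : Fin n → ℝ) (y : ℝ) {u : ℝ}
    (h1 : HasDerivAt z (deriv z u) u)
    (h2 : HasDerivAt (deriv z) (deriv (deriv z) u) u)
    (h3 : HasDerivAt (deriv (deriv z)) (deriv (deriv (deriv z)) u) u) :
    HasDerivAt (fun v => LXf z W y v) (LXXf z W y u) u := by
  have hQ := hasDerivAt_Q y u
  have hs := ((hQ.pow 2).const_sub 1).const_mul ((Real.sqrt 2)⁻¹)
  have hA := hs.smul (h1.add_const W)
  have hB := hQ.smul h2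
  have hC := h3.const_smul ((Real.sqrt 2)⁻¹)
  have hmain := (hA.add hB).sub hC
  refine hmain.congr_deriv (Eq.symm ?_)
  funext i
  have hc2 := sqrt2_inv_sq
  simp only [LXXf, Pi.add_apply, Pi.sub_apply, Pi.smul_apply, smul_eq_mul, pow_one,
    Nat.cast_ofNat, Pi.pow_apply]
  linear_combination (2 * Real.tanh ((u + y) / Real.sqrt 2) *
    (1 - Real.tanh ((u + y) / Real.sqrt 2) ^ 2) * (z u i + W i)) * hc2

lemma aux (t n : ℕ) (I : Set ℝ) (hIo : IsOpen I) (z : ℝ → Fin n → ℝ)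
    (hz : ContDiffOn ℝ 3 z I) (W W1 : Fin n → ℝ) (y : ℝ) (L : ℝ → Fin n → ℝ)
    (hLdef : ∀ x, L x = Real.tanh ((x + y) / Real.sqrt 2) • (z x + W) -
      (Real.sqrt 2)⁻¹ • (deriv z x + W1))
    (hLL : ∀ x ∈ I, pform t n (L x) (L x) = -1)
    (hxx : ∀ x ∈ I, pform t n (deriv L x) (deriv L x) = 0) :
    ∀ x ∈ I,
      Real.sqrt 2 * pform t n (z x + W) ((2 : ℝ) • deriv z x - deriv (deriv (deriv z)) x) *
        Real.tanh ((x + y) / Real.sqrt 2) =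
      pform t n (deriv z x + W1) ((2 : ℝ) • deriv z x - deriv (deriv (deriv z)) x) := by
  have hsqrt : Real.sqrt 2 * (Real.sqrt 2)⁻¹ = 1 :=
    mul_inv_cancel₀ (by positivity)
  have hc2 := sqrt2_inv_sq
  have stepA : ∀ u ∈ I, pform t n (LXf z W y u) (L u) = 0 := by
    intro u hu
    obtain ⟨h1, h2, _⟩ := hd3 hIo hz hu
    have hLd := hasDerivAt_Lfun z W W1 y L hLdef h1 h2
    have hF := pform_hasDerivAt t hLd hLd
    have hF0 : HasDerivAt (fun v => pform t n (L v) (L v)) 0 u := by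
      have hev : (fun v => pform t n (L v) (L v)) =ᶠ[nhds u] (fun _ => (-1 : ℝ)) :=
        Filter.eventually_of_mem (hIo.mem_nhds hu) (fun v hv => hLL v hv)
      exact (hasDerivAt_const u (-1 : ℝ)).congr_of_eventuallyEq hev
    have h0 := hF.unique hF0
    rw [pform_comm t n (L u) (LXf z W y u)] at h0
    linarith
  intro x hx
  obtain ⟨h1, h2, h3⟩ := hd3 hIo hz hx
  have hLd := hasDerivAt_Lfun z W W1 y L hLdef h1 h2
  have hLXd := hasDerivAt_LXf z W y h1 h2 h3
  have hLXLX : pform t n (LXf z W y x) (LXf z W y x) = 0 := by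
    have h := hxx x hx; rwa [hLd.deriv] at h
  have stepB : pform t n (LXXf z W y x) (L x) = 0 := by
    have hG := pform_hasDerivAt t hLXd hLd
    have hG0 : HasDerivAt (fun v => pform t n (LXf z W y v) (L v)) 0 x := by
      have hev : (fun v => pform t n (LXf z W y v) (L v)) =ᶠ[nhds x] (fun _ => (0 : ℝ)) :=
        Filter.eventually_of_mem (hIo.mem_nhds hx) (fun v hv => stepA v hv)
      exact (hasDerivAt_const x (0 : ℝ)).congr_of_eventuallyEq hev
    have h0 := hG.unique hG0
    linarith [h0, hLXLX]
  have hA := stepA x hx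
  unfold LXf at hA
  rw [pform_sub_left, pform_add_left, pform_smul_left, pform_smul_left, pform_smul_left] at hA
  unfold LXXf at stepB
  rw [pform_sub_left, pform_add_left, pform_add_left, pform_smul_left, pform_smul_left,
    pform_smul_left, pform_smul_left] at stepB
  have hC : pform t n ((2 : ℝ) • deriv z x - deriv (deriv (deriv z)) x) (L x) = 0 := by
    rw [pform_sub_left, pform_smul_left]
    linear_combination (2 * Real.tanh ((x + y) / Real.sqrt 2)) * hA +
      2 * (Real.sqrt 2)⁻¹ * stepB +
      (2 * pform t n (deriv (deriv (deriv z)) x) (L x) -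
        4 * (1 - Real.tanh ((x + y) / Real.sqrt 2) ^ 2) * pform t n (deriv z x) (L x)) * hc2
  have h0 : Real.tanh ((x + y) / Real.sqrt 2) *
      pform t n (z x + W) ((2 : ℝ) • deriv z x - deriv (deriv (deriv z)) x) -
      (Real.sqrt 2)⁻¹ *
        pform t n (deriv z x + W1) ((2 : ℝ) • deriv z x - deriv (deriv (deriv z)) x) = 0 := by
    have hLV : pform t n (L x) ((2 : ℝ) • deriv z x - deriv (deriv (deriv z)) x) =
        Real.tanh ((x + y) / Real.sqrt 2) *
          pform t n (z x + W) ((2 : ℝ) • deriv z x - deriv (deriv (deriv z)) x) -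
        (Real.sqrt 2)⁻¹ *
          pform t n (deriv z x + W1) ((2 : ℝ) • deriv z x - deriv (deriv (deriv z)) x) := by
      rw [hLdef x, pform_sub_left, pform_smul_left, pform_smul_left]
    rw [← hLV, pform_comm]
    exact hC
  linear_combination Real.sqrt 2 * h0 +
    pform t n (deriv z x + W1) ((2 : ℝ) • deriv z x - deriv (deriv (deriv z)) x) * hsqrt

theorem stmt_16 (m s : ℕ) (hm : 2 ≤ m) (hs : s ≤ m) (I J : Set ℝ)
    (hIo : IsOpen I) (hIc : I.OrdConnected) (hJo : IsOpen J) (hJc : J.OrdConnected)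
    (z w : ℝ → Fin (m + 1) → ℝ) (hz : ContDiffOn ℝ 3 z I) (hw : ContDiffOn ℝ 3 w J)
    (L : ℝ → ℝ → Fin (m + 1) → ℝ)
    (hLdef : ∀ x y : ℝ,
      L x y = Real.tanh ((x + y) / Real.sqrt 2) • (z x + w y) -
        (Real.sqrt 2)⁻¹ • (deriv z x + deriv w y))
    (hLL : ∀ x ∈ I, ∀ y ∈ J, pform (s + 1) (m + 1) (L x y) (L x y) = -1)
    (hxx : ∀ x ∈ I, ∀ y ∈ J, pform (s + 1) (m + 1) (pd1 L x y) (pd1 L x y) = 0)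
    (hyy : ∀ x ∈ I, ∀ y ∈ J, pform (s + 1) (m + 1) (pd2 L x y) (pd2 L x y) = 0) :
    (∀ x ∈ I, ∀ y ∈ J,
      Real.sqrt 2 * pform (s + 1) (m + 1) (z x + w y)
          ((2 : ℝ) • deriv z x - deriv (deriv (deriv z)) x) *
        Real.tanh ((x + y) / Real.sqrt 2) =
      pform (s + 1) (m + 1) (deriv z x + deriv w y)
        ((2 : ℝ) • deriv z x - deriv (deriv (deriv z)) x)) ∧
    (∀ x ∈ I, ∀ y ∈ J,
      Real.sqrt 2 * pform (s + 1) (m + 1) (z x + w y)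
          ((2 : ℝ) • deriv w y - deriv (deriv (deriv w)) y) *
        Real.tanh ((x + y) / Real.sqrt 2) =
      pform (s + 1) (m + 1) (deriv z x + deriv w y)
        ((2 : ℝ) • deriv w y - deriv (deriv (deriv w)) y)) ∧
    (∀ x ∈ I, ∀ y ∈ J,
      pform (s + 1) (m + 1) (pd1 L x y) (pd2 L x y) =
        -(sech ((x + y) / Real.sqrt 2)) ^ 2) := by
  refine ⟨?_, ?_, ?_⟩
  · -- (iii.2)
    intro x hx y hy
    exact aux (s + 1) (m + 1) I hIo z hz (w y) (deriv w y) y (fun u => L u y)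
      (fun u => hLdef u y) (fun u hu => hLL u hu y hy)
      (fun u hu => by simpa [pd1] using hxx u hu y hy) x hx
  · -- (iii.3)
    intro x hx y hy
    have hLdef2 : ∀ v, L x v = Real.tanh ((v + x) / Real.sqrt 2) • (w v + z x) -
        (Real.sqrt 2)⁻¹ • (deriv w v + deriv z x) := by
      intro v
      rw [hLdef x v, add_comm x v, add_comm (z x) (w v), add_comm (deriv z x) (deriv w v)]
    have h := aux (s + 1) (m + 1) J hJo w hw (z x) (deriv z x) x (fun v => L x v)
      hLdef2 (fun v hv => hLL x hx v hv)
      (fun v hv => by simpa [pd2] using hyy x hx v hv) y hy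
    rw [add_comm (w y) (z x), add_comm y x, add_comm (deriv w y) (deriv z x)] at h
    exact h
  · -- mixed term
    intro x hx y hy
    obtain ⟨hz1, hz2, _⟩ := hd3 hIo hz hx
    obtain ⟨hw1, hw2, _⟩ := hd3 hJo hw hy
    have hLdx := hasDerivAt_Lfun z (w y) (deriv w y) y (fun u => L u y)
      (fun u => hLdef u y) hz1 hz2
    have hpd1 : pd1 L x y = LXf z (w y) y x := by unfold pd1; exact hLdx.deriv
    have hLdef2 : ∀ v, L x v = Real.tanh ((v + x) / Real.sqrt 2) • (w v + z x) -
        (Real.sqrt 2)⁻¹ • (deriv w v + deriv z x) := by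
      intro v
      rw [hLdef x v, add_comm x v, add_comm (z x) (w v), add_comm (deriv z x) (deriv w v)]
    have hLdy := hasDerivAt_Lfun w (z x) (deriv z x) x (fun v => L x v) hLdef2 hw1 hw2
    have hpd2 : pd2 L x y = LXf w (z x) x y := by unfold pd2; exact hLdy.deriv
    have stepA : ∀ v ∈ J, pform (s + 1) (m + 1) (LXf z (w v) v x) (L x v) = 0 := by
      intro v hv
      obtain ⟨g1, g2, _⟩ := hd3 hIo hz hx
      have hLd := hasDerivAt_Lfun z (w v) (deriv w v) v (fun a => L a v)
        (fun a => hLdef a v) g1 g2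
      have hF := pform_hasDerivAt (s + 1) hLd hLd
      have hF0 : HasDerivAt (fun a => pform (s + 1) (m + 1) (L a v) (L a v)) 0 x := by
        have hev : (fun a => pform (s + 1) (m + 1) (L a v) (L a v)) =ᶠ[nhds x]
            (fun _ => (-1 : ℝ)) :=
          Filter.eventually_of_mem (hIo.mem_nhds hx) (fun a ha => hLL a ha v hv)
        exact (hasDerivAt_const x (-1 : ℝ)).congr_of_eventuallyEq hev
      have h0 := hF.unique hF0
      rw [pform_comm (s + 1) (m + 1) (L x v) (LXf z (w v) v x)] at h0
      linarith
    -- derivative of v ↦ LXf z (w v) v x at y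
    have hQ : HasDerivAt (fun v => Real.tanh ((x + v) / Real.sqrt 2))
        ((1 - Real.tanh ((x + y) / Real.sqrt 2) ^ 2) * (Real.sqrt 2)⁻¹) y := by
      have h := hasDerivAt_Q x y
      have hfe : (fun v => Real.tanh ((v + x) / Real.sqrt 2)) =
          (fun v => Real.tanh ((x + v) / Real.sqrt 2)) := by
        funext v; rw [add_comm]
      rw [hfe, add_comm y x] at h
      exact h
    have hsc := ((hQ.pow 2).const_sub 1).const_mul ((Real.sqrt 2)⁻¹)
    have hA := hsc.smul (hw1.const_add (z x))
    have hB := hQ.smul_const (deriv z x)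
    have hmain := ((hA.add hB).sub_const ((Real.sqrt 2)⁻¹ • deriv (deriv z) x))
    have hM : HasDerivAt (fun v => LXf z (w v) v x)
        ((-(1 - Real.tanh ((x + y) / Real.sqrt 2) ^ 2)) • L x y) y := by
      refine hmain.congr_deriv (Eq.symm ?_)
      funext i
      have hc2 := sqrt2_inv_sq
      rw [hLdef x y]
      simp only [Pi.add_apply, Pi.sub_apply, Pi.smul_apply, smul_eq_mul, pow_one,
        Nat.cast_ofNat, Pi.pow_apply]
      linear_combination (2 * Real.tanh ((x + y) / Real.sqrt 2) *
        (1 - Real.tanh ((x + y) / Real.sqrt 2) ^ 2) * (z x i + w y i)) * hc2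
    have hG := pform_hasDerivAt (s + 1) hM hLdy
    have hG0 : HasDerivAt (fun v => pform (s + 1) (m + 1) (LXf z (w v) v x) (L x v)) 0 y := by
      have hev : (fun v => pform (s + 1) (m + 1) (LXf z (w v) v x) (L x v)) =ᶠ[nhds y]
          (fun _ => (0 : ℝ)) :=
        Filter.eventually_of_mem (hJo.mem_nhds hy) (fun v hv => stepA v hv)
      exact (hasDerivAt_const y (0 : ℝ)).congr_of_eventuallyEq hev
    have h0 := hG.unique hG0
    rw [pform_smul_left] at h0
    have hL1 := hLL x hx y hy
    rw [hpd1, hpd2]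
    have hsech : -(sech ((x + y) / Real.sqrt 2)) ^ 2 =
        -(1 - Real.tanh ((x + y) / Real.sqrt 2) ^ 2) := by
      unfold sech
      rw [one_sub_tanh_sq]
    rw [hsech]
    linear_combination h0 + (1 - Real.tanh ((x + y) / Real.sqrt 2) ^ 2) * hL1
end

section
/- Let a, p, q, r be real numbers with a > 0 and p > r > q > 0. Define the curve z : ℝ → ℝ^7 by z(x) = (a·cosh(px), (√(4r²+a²p²(p²−r²))/(q·√(r²−q²)))·cosh(qx), (√(4q²+a²p²(p²−q²))/(r·√(r²−q²)))·sinh(rx), a·sinh(px), (√(4r²+a²p²(p²−r²))/(q·√(r²−q²)))·sinh(qx), (√(4q²+a²p²(p²−q²))/(r·√(r²−q²)))·cosh(rx), √(4(q²+r²)+a²(p²−r²)(p²−q²))/(qr)). Then, with the bilinear form of index 3 on ℝ^7, for every x ∈ ℝ: ⟨z(x), z(x)⟩_3 = 0, ⟨z'(x), z'(x)⟩_3 = 4, ⟨z''(x), z''(x)⟩_3 = 0, and z'''(x) ≠ 0. (Hence z is a spacelike curve of constant speed 2 lying in the light cone of 𝔼^7_3 with lightlike acceleration and nonvanishing third derivative,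 so by Theorem 5.1(b) the map L(x,y) = z(x)/(x+y) − z'(x)/2 gives a minimal Lorentz surface of constant curvature one in S^6_3(1).) -/
lemma aux_cosh (c k x : ℝ) :
    HasDerivAt (fun t => c * Real.cosh (k * t)) (c * k * Real.sinh (k * x)) x := by
  have h : HasDerivAt (fun t : ℝ => k * t) k x := by
    simpa using (hasDerivAt_id x).const_mul k
  have := h.cosh.const_mul c
  refine this.congr_deriv ?_
  ring

lemma aux_sinh (c k x : ℝ) :
    HasDerivAt (fun t => c * Real.sinh (k * t)) (c * k * Real.cosh (k * x)) x := by
  have h : HasDerivAt (fun t : ℝ => k * t) k x := by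
    simpa using (hasDerivAt_id x).const_mul k
  have := h.sinh.const_mul c
  refine this.congr_deriv ?_
  ring

lemma derivA (a b c d p q r : ℝ) :
    deriv (fun x => ![a * Real.cosh (p * x), b * Real.cosh (q * x), c * Real.sinh (r * x),
      a * Real.sinh (p * x), b * Real.sinh (q * x), c * Real.cosh (r * x), d]) =
    fun x => ![a * p * Real.sinh (p * x), b * q * Real.sinh (q * x), c * r * Real.cosh (r * x),
      a * p * Real.cosh (p * x), b * q * Real.cosh (q * x), c * r * Real.sinh (r * x), 0] := by
  funext x
  have h : HasDerivAt (fun x => ![a * Real.cosh (p * x), b * Real.cosh (q * x),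
      c * Real.sinh (r * x), a * Real.sinh (p * x), b * Real.sinh (q * x),
      c * Real.cosh (r * x), d])
      (![a * p * Real.sinh (p * x), b * q * Real.sinh (q * x), c * r * Real.cosh (r * x),
        a * p * Real.cosh (p * x), b * q * Real.cosh (q * x), c * r * Real.sinh (r * x), 0]) x := by
    rw [hasDerivAt_pi]
    intro i
    fin_cases i <;> simp <;>
      first
        | exact aux_cosh _ _ _
        | exact aux_sinh _ _ _
        | exact hasDerivAt_const _ _
  exact h.deriv

lemma derivB (a b c p q r : ℝ) :
    deriv (fun x => ![a * Real.sinh (p * x), b * Real.sinh (q * x), c * Real.cosh (r * x),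
      a * Real.cosh (p * x), b * Real.cosh (q * x), c * Real.sinh (r * x), 0]) =
    fun x => ![a * p * Real.cosh (p * x), b * q * Real.cosh (q * x), c * r * Real.sinh (r * x),
      a * p * Real.sinh (p * x), b * q * Real.sinh (q * x), c * r * Real.cosh (r * x),
      (0 : ℝ)] := by
  funext x
  have h : HasDerivAt (fun x => ![a * Real.sinh (p * x), b * Real.sinh (q * x),
      c * Real.cosh (r * x), a * Real.cosh (p * x), b * Real.cosh (q * x),
      c * Real.sinh (r * x), (0 : ℝ)])
      (![a * p * Real.cosh (p * x), b * q * Real.cosh (q * x), c * r * Real.sinh (r * x),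
        a * p * Real.sinh (p * x), b * q * Real.sinh (q * x), c * r * Real.cosh (r * x), 0]) x := by
    rw [hasDerivAt_pi]
    intro i
    fin_cases i <;> simp <;>
      first
        | exact aux_cosh _ _ _
        | exact aux_sinh _ _ _
        | exact hasDerivAt_const _ _
  exact h.deriv

lemma pform7 (u0 u1 u2 u3 u4 u5 u6 : ℝ) :
    pform 3 7 ![u0, u1, u2, u3, u4, u5, u6] ![u0, u1, u2, u3, u4, u5, u6] =
      -(u0 * u0) - u1 * u1 - u2 * u2 + u3 * u3 + u4 * u4 + u5 * u5 + u6 * u6 := by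
  simp [pform, Fin.sum_univ_succ, Matrix.cons_val_succ, Fin.val_succ]
  ring

theorem stmt_17 (a p q r : ℝ) (ha : 0 < a) (hpr : r < p) (hrq : q < r) (hq : 0 < q)
    (z : ℝ → Fin 7 → ℝ)
    (hzdef : ∀ x : ℝ, z x =
      ![a * Real.cosh (p * x),
        (Real.sqrt (4 * r ^ 2 + a ^ 2 * p ^ 2 * (p ^ 2 - r ^ 2)) /
          (q * Real.sqrt (r ^ 2 - q ^ 2))) * Real.cosh (q * x),
        (Real.sqrt (4 * q ^ 2 + a ^ 2 * p ^ 2 * (p ^ 2 - q ^ 2)) /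
          (r * Real.sqrt (r ^ 2 - q ^ 2))) * Real.sinh (r * x),
        a * Real.sinh (p * x),
        (Real.sqrt (4 * r ^ 2 + a ^ 2 * p ^ 2 * (p ^ 2 - r ^ 2)) /
          (q * Real.sqrt (r ^ 2 - q ^ 2))) * Real.sinh (q * x),
        (Real.sqrt (4 * q ^ 2 + a ^ 2 * p ^ 2 * (p ^ 2 - q ^ 2)) /
          (r * Real.sqrt (r ^ 2 - q ^ 2))) * Real.cosh (r * x),
        Real.sqrt (4 * (q ^ 2 + r ^ 2) + a ^ 2 * (p ^ 2 - r ^ 2) * (p ^ 2 - q ^ 2)) /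
          (q * r)]) :
    ∀ x : ℝ,
      pform 3 7 (z x) (z x) = 0 ∧
      pform 3 7 (deriv z x) (deriv z x) = 4 ∧
      pform 3 7 (deriv (deriv z) x) (deriv (deriv z) x) = 0 ∧
      deriv (deriv (deriv z)) x ≠ 0 := by
  have hr : 0 < r := hq.trans hrq
  have hp : 0 < p := hr.trans hpr
  set b : ℝ := Real.sqrt (4 * r ^ 2 + a ^ 2 * p ^ 2 * (p ^ 2 - r ^ 2)) /
      (q * Real.sqrt (r ^ 2 - q ^ 2)) with hbdef
  set c : ℝ := Real.sqrt (4 * q ^ 2 + a ^ 2 * p ^ 2 * (p ^ 2 - q ^ 2)) /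
      (r * Real.sqrt (r ^ 2 - q ^ 2)) with hcdef
  set d : ℝ := Real.sqrt (4 * (q ^ 2 + r ^ 2) + a ^ 2 * (p ^ 2 - r ^ 2) * (p ^ 2 - q ^ 2)) /
      (q * r) with hddef
  have hzfun : z = fun x => ![a * Real.cosh (p * x), b * Real.cosh (q * x),
      c * Real.sinh (r * x), a * Real.sinh (p * x), b * Real.sinh (q * x),
      c * Real.cosh (r * x), d] := funext hzdef
  have hz1 : deriv z = fun x => ![a * p * Real.sinh (p * x), b * q * Real.sinh (q * x),
      c * r * Real.cosh (r * x), a * p * Real.cosh (p * x), b * q * Real.cosh (q * x),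
      c * r * Real.sinh (r * x), 0] := by
    rw [hzfun]; exact derivA a b c d p q r
  have hz2 : deriv (deriv z) = fun x => ![a * p * p * Real.cosh (p * x),
      b * q * q * Real.cosh (q * x), c * r * r * Real.sinh (r * x),
      a * p * p * Real.sinh (p * x), b * q * q * Real.sinh (q * x),
      c * r * r * Real.cosh (r * x), 0] := by
    rw [hz1]
    exact derivB (a * p) (b * q) (c * r) p q r
  have hz3 : deriv (deriv (deriv z)) = fun x => ![a * p * p * p * Real.sinh (p * x),
      b * q * q * q * Real.sinh (q * x), c * r * r * r * Real.cosh (r * x),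
      a * p * p * p * Real.cosh (p * x), b * q * q * q * Real.cosh (q * x),
      c * r * r * r * Real.sinh (r * x), 0] := by
    rw [hz2]
    exact derivA (a * p * p) (b * q * q) (c * r * r) 0 p q r
  -- positivity facts
  have hT : (0 : ℝ) < r ^ 2 - q ^ 2 := by nlinarith
  have hp2r2 : (0 : ℝ) ≤ p ^ 2 - r ^ 2 := by nlinarith
  have hp2q2 : (0 : ℝ) ≤ p ^ 2 - q ^ 2 := by nlinarith
  have hN1 : (0 : ℝ) ≤ 4 * r ^ 2 + a ^ 2 * p ^ 2 * (p ^ 2 - r ^ 2) := by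
    have h1 : (0 : ℝ) ≤ a ^ 2 * p ^ 2 * (p ^ 2 - r ^ 2) :=
      mul_nonneg (by positivity) hp2r2
    nlinarith [sq_nonneg r]
  have hN2 : (0 : ℝ) ≤ 4 * q ^ 2 + a ^ 2 * p ^ 2 * (p ^ 2 - q ^ 2) := by
    have h1 : (0 : ℝ) ≤ a ^ 2 * p ^ 2 * (p ^ 2 - q ^ 2) :=
      mul_nonneg (by positivity) hp2q2
    nlinarith [sq_nonneg q]
  have hN3 : (0 : ℝ) ≤ 4 * (q ^ 2 + r ^ 2) + a ^ 2 * (p ^ 2 - r ^ 2) * (p ^ 2 - q ^ 2) := by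
    have h1 : (0 : ℝ) ≤ a ^ 2 * (p ^ 2 - r ^ 2) * (p ^ 2 - q ^ 2) :=
      mul_nonneg (mul_nonneg (by positivity) hp2r2) hp2q2
    nlinarith [sq_nonneg q, sq_nonneg r]
  have hb2 : b ^ 2 = (4 * r ^ 2 + a ^ 2 * p ^ 2 * (p ^ 2 - r ^ 2)) / (q ^ 2 * (r ^ 2 - q ^ 2)) := by
    rw [hbdef, div_pow, mul_pow, Real.sq_sqrt hN1, Real.sq_sqrt hT.le]
  have hc2 : c ^ 2 = (4 * q ^ 2 + a ^ 2 * p ^ 2 * (p ^ 2 - q ^ 2)) / (r ^ 2 * (r ^ 2 - q ^ 2)) := by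
    rw [hcdef, div_pow, mul_pow, Real.sq_sqrt hN2, Real.sq_sqrt hT.le]
  have hd2 : d ^ 2 = (4 * (q ^ 2 + r ^ 2) + a ^ 2 * (p ^ 2 - r ^ 2) * (p ^ 2 - q ^ 2)) /
      (q ^ 2 * r ^ 2) := by
    rw [hddef, div_pow, mul_pow, Real.sq_sqrt hN3]
  have hkey1 : -a ^ 2 - b ^ 2 + c ^ 2 + d ^ 2 = 0 := by
    rw [hb2, hc2, hd2]
    field_simp
    ring
  have hkey2 : a ^ 2 * p ^ 2 + b ^ 2 * q ^ 2 - c ^ 2 * r ^ 2 = 4 := by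
    rw [hb2, hc2]
    field_simp
    ring
  have hkey3 : -(a ^ 2 * p ^ 4) - b ^ 2 * q ^ 4 + c ^ 2 * r ^ 4 = 0 := by
    rw [hb2, hc2]
    field_simp
    ring
  intro x
  have h1 := Real.cosh_sq_sub_sinh_sq (p * x)
  have h2 := Real.cosh_sq_sub_sinh_sq (q * x)
  have h3 := Real.cosh_sq_sub_sinh_sq (r * x)
  refine ⟨?_, ?_, ?_, ?_⟩
  · simp only [hzfun]
    rw [pform7]
    linear_combination (-(a ^ 2)) * h1 + (-(b ^ 2)) * h2 + c ^ 2 * h3 + hkey1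
  · simp only [hz1]
    rw [pform7]
    linear_combination (a * p) ^ 2 * h1 + (b * q) ^ 2 * h2 + (-((c * r) ^ 2)) * h3 + hkey2
  · simp only [hz2]
    rw [pform7]
    linear_combination (-((a * p * p) ^ 2)) * h1 + (-((b * q * q) ^ 2)) * h2 +
      (c * r * r) ^ 2 * h3 + hkey3
  · rw [hz3]
    intro h
    have h3' := congrFun h 3
    simp only [Matrix.cons_val_three, Matrix.tail_cons, Matrix.head_cons, Pi.zero_apply] at h3'
    have hpos : (0 : ℝ) < a * p * p * p * Real.cosh (p * x) :=
      mul_pos (by positivity) (Real.cosh_pos (p * x))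
    exact hpos.ne' h3'
end

section
/- Let a, b, p, q be positive real numbers satisfying p² < (4+a²)/(2+a²) < q² and b²p²q² > a²(q²−1)(1−p²) + 2(p²+q²−2). Define the curve z : ℝ → ℝ^8 by z(x) = (b, a·cosh(x), (√(q²(2+a²)−(4+a²))/(p·√(q²−p²)))·sinh(px), (√(4+a²−p²(2+a²))/(q·√(q²−p²)))·sinh(qx), a·sinh(x), (√(q²(2+a²)−(4+a²))/(p·√(q²−p²)))·cosh(px), (√(4+a²−p²(2+a²))/(q·√(q²−p²)))·cosh(qx), √(b²p²q²−a²(q²−1)(1−p²)−2(p²+q²−2))/(pq)). Then, with the bilinear form of index 4 on ℝ^8, for every x ∈ ℝ: ⟨z(x), z(x)⟩_4 = 0, ⟨z'(x), z'(x)⟩_4 = −2, ⟨z''(x), z''(x)⟩_4 = 4, and z'''(x) ≠ 2z'(x). (Hence z is a timelike curve of constant speed √2 lying in the light cone of 𝔼^8_4 with ⟨z'',z''⟩ = 4 and z''' ≠ 2z', so by Theorem 6.1(ii) the map L(x,y) = z(x)·tanh((x+y)/√2) − z'(x)/√2 gives a minimal Lorentz surface of constant curvature −1 in H^7_3(−1).)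 -/
noncomputable def Wf (p q k0 A C1 C2 k7 : ℝ) : ℝ → Fin 8 → ℝ := fun x =>
  ![k0, A * Real.cosh x, C1 * Real.sinh (p*x), C2 * Real.sinh (q*x),
    A * Real.sinh x, C1 * Real.cosh (p*x), C2 * Real.cosh (q*x), k7]

noncomputable def Vf (p q A C1 C2 : ℝ) : ℝ → Fin 8 → ℝ := fun x =>
  ![0, A * Real.sinh x, C1 * Real.cosh (p*x), C2 * Real.cosh (q*x),
    A * Real.cosh x, C1 * Real.sinh (p*x), C2 * Real.sinh (q*x), 0]

lemma hd_sinh (c k : ℝ) (x : ℝ) :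
    HasDerivAt (fun x => c * Real.sinh (k*x)) (c * k * Real.cosh (k*x)) x := by
  have h1 : HasDerivAt (fun x : ℝ => k * x) k x := by
    simpa using (hasDerivAt_id x).const_mul k
  have := ((Real.hasDerivAt_sinh (k*x)).comp x h1).const_mul c
  exact this.congr_deriv (by ring)

lemma hd_cosh (c k : ℝ) (x : ℝ) :
    HasDerivAt (fun x => c * Real.cosh (k*x)) (c * k * Real.sinh (k*x)) x := by
  have h1 : HasDerivAt (fun x : ℝ => k * x) k x := by
    simpa using (hasDerivAt_id x).const_mul k
  have := ((Real.hasDerivAt_cosh (k*x)).comp x h1).const_mul c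
  exact this.congr_deriv (by ring)

lemma hdW (p q k0 A C1 C2 k7 x : ℝ) :
    HasDerivAt (Wf p q k0 A C1 C2 k7) (Vf p q A (C1*p) (C2*q) x) x := by
  rw [hasDerivAt_pi]
  intro i
  fin_cases i <;> simp only [Wf, Vf, Matrix.cons_val_zero, Matrix.cons_val_one,
    Matrix.head_cons, Matrix.cons_val_fin_one, Fin.isValue]
  · exact hasDerivAt_const x k0
  · simpa using hd_cosh A 1 x
  · exact hd_sinh C1 p x
  · exact hd_sinh C2 q x
  · simpa using hd_sinh A 1 x
  · exact hd_cosh C1 p x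
  · exact hd_cosh C2 q x
  · exact hasDerivAt_const x k7

lemma hdV (p q A C1 C2 x : ℝ) :
    HasDerivAt (Vf p q A C1 C2) (Wf p q 0 A (C1*p) (C2*q) 0 x) x := by
  rw [hasDerivAt_pi]
  intro i
  fin_cases i <;> simp only [Wf, Vf, Matrix.cons_val_zero, Matrix.cons_val_one,
    Matrix.head_cons, Matrix.cons_val_fin_one, Fin.isValue]
  · exact hasDerivAt_const x 0
  · simpa using hd_sinh A 1 x
  · exact hd_cosh C1 p x
  · exact hd_cosh C2 q x
  · simpa using hd_cosh A 1 x
  · exact hd_sinh C1 p x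
  · exact hd_sinh C2 q x
  · exact hasDerivAt_const x 0

lemma pformW (p q k0 A C1 C2 k7 x : ℝ) :
    pform 4 8 (Wf p q k0 A C1 C2 k7 x) (Wf p q k0 A C1 C2 k7 x)
    = -(k0*k0) - (A*Real.cosh x)^2 - (C1*Real.sinh (p*x))^2 - (C2*Real.sinh (q*x))^2
      + (A*Real.sinh x)^2 + (C1*Real.cosh (p*x))^2 + (C2*Real.cosh (q*x))^2 + k7*k7 := by
  simp [pform, Wf, Fin.sum_univ_succ, Fin.val_succ]
  ring

lemma pformV (p q A C1 C2 x : ℝ) :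
    pform 4 8 (Vf p q A C1 C2 x) (Vf p q A C1 C2 x)
    = - (A*Real.sinh x)^2 - (C1*Real.cosh (p*x))^2 - (C2*Real.cosh (q*x))^2
      + (A*Real.cosh x)^2 + (C1*Real.sinh (p*x))^2 + (C2*Real.sinh (q*x))^2 := by
  simp [pform, Vf, Fin.sum_univ_succ, Fin.val_succ]
  ring

theorem stmt_18 (a b p q : ℝ) (ha : 0 < a) (hb : 0 < b) (hp : 0 < p) (hq : 0 < q)
    (h1 : p ^ 2 < (4 + a ^ 2) / (2 + a ^ 2)) (h2 : (4 + a ^ 2) / (2 + a ^ 2) < q ^ 2)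
    (h3 : b ^ 2 * p ^ 2 * q ^ 2 >
      a ^ 2 * (q ^ 2 - 1) * (1 - p ^ 2) + 2 * (p ^ 2 + q ^ 2 - 2))
    (z : ℝ → Fin 8 → ℝ)
    (hzdef : ∀ x : ℝ, z x =
      ![b,
        a * Real.cosh x,
        (Real.sqrt (q ^ 2 * (2 + a ^ 2) - (4 + a ^ 2)) /
          (p * Real.sqrt (q ^ 2 - p ^ 2))) * Real.sinh (p * x),
        (Real.sqrt (4 + a ^ 2 - p ^ 2 * (2 + a ^ 2)) /
          (q * Real.sqrt (q ^ 2 - p ^ 2))) * Real.sinh (q * x),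
        a * Real.sinh x,
        (Real.sqrt (q ^ 2 * (2 + a ^ 2) - (4 + a ^ 2)) /
          (p * Real.sqrt (q ^ 2 - p ^ 2))) * Real.cosh (p * x),
        (Real.sqrt (4 + a ^ 2 - p ^ 2 * (2 + a ^ 2)) /
          (q * Real.sqrt (q ^ 2 - p ^ 2))) * Real.cosh (q * x),
        Real.sqrt (b ^ 2 * p ^ 2 * q ^ 2 - a ^ 2 * (q ^ 2 - 1) * (1 - p ^ 2) -
          2 * (p ^ 2 + q ^ 2 - 2)) / (p * q)]) :
    ∀ x : ℝ,
      pform 4 8 (z x) (z x) = 0 ∧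
      pform 4 8 (deriv z x) (deriv z x) = -2 ∧
      pform 4 8 (deriv (deriv z) x) (deriv (deriv z) x) = 4 ∧
      deriv (deriv (deriv z)) x ≠ (2 : ℝ) • deriv z x := by
  have ha2 : (0:ℝ) < 2 + a ^ 2 := by positivity
  have hE1 : 0 < q ^ 2 * (2 + a ^ 2) - (4 + a ^ 2) := by
    have := (div_lt_iff₀ ha2).mp h2; nlinarith
  have hE2 : 0 < 4 + a ^ 2 - p ^ 2 * (2 + a ^ 2) := by
    have := (lt_div_iff₀ ha2).mp h1; nlinarith
  have hD : 0 < q ^ 2 - p ^ 2 := by nlinarith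
  have hE3 : 0 ≤ b ^ 2 * p ^ 2 * q ^ 2 - a ^ 2 * (q ^ 2 - 1) * (1 - p ^ 2) -
      2 * (p ^ 2 + q ^ 2 - 2) := by linarith
  set c1 : ℝ := Real.sqrt (q ^ 2 * (2 + a ^ 2) - (4 + a ^ 2)) /
      (p * Real.sqrt (q ^ 2 - p ^ 2)) with hc1
  set c2 : ℝ := Real.sqrt (4 + a ^ 2 - p ^ 2 * (2 + a ^ 2)) /
      (q * Real.sqrt (q ^ 2 - p ^ 2)) with hc2
  set c3 : ℝ := Real.sqrt (b ^ 2 * p ^ 2 * q ^ 2 - a ^ 2 * (q ^ 2 - 1) * (1 - p ^ 2) -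
      2 * (p ^ 2 + q ^ 2 - 2)) / (p * q) with hc3
  have hc1sq : c1 ^ 2 = (q ^ 2 * (2 + a ^ 2) - (4 + a ^ 2)) / (p ^ 2 * (q ^ 2 - p ^ 2)) := by
    rw [hc1, div_pow, mul_pow, Real.sq_sqrt hE1.le, Real.sq_sqrt hD.le]
  have hc2sq : c2 ^ 2 = (4 + a ^ 2 - p ^ 2 * (2 + a ^ 2)) / (q ^ 2 * (q ^ 2 - p ^ 2)) := by
    rw [hc2, div_pow, mul_pow, Real.sq_sqrt hE2.le, Real.sq_sqrt hD.le]
  have hc3sq : c3 ^ 2 = (b ^ 2 * p ^ 2 * q ^ 2 - a ^ 2 * (q ^ 2 - 1) * (1 - p ^ 2) -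
      2 * (p ^ 2 + q ^ 2 - 2)) / (p ^ 2 * q ^ 2) := by
    rw [hc3, div_pow, mul_pow, Real.sq_sqrt hE3]
  have hz : z = Wf p q b a c1 c2 c3 := by
    funext x; rw [hzdef x]; rfl
  have hz1 : deriv z = Vf p q a (c1*p) (c2*q) := by
    funext x; rw [hz]; exact (hdW p q b a c1 c2 c3 x).deriv
  have hz2 : deriv (deriv z) = Wf p q 0 a (c1*p*p) (c2*q*q) 0 := by
    funext x; rw [hz1]; exact (hdV p q a (c1*p) (c2*q) x).deriv
  have hz3 : deriv (deriv (deriv z)) = Vf p q a (c1*p*p*p) (c2*q*q*q) := by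
    funext x; rw [hz2]; exact (hdW p q 0 a (c1*p*p) (c2*q*q) 0 x).deriv
  have hp' : p ≠ 0 := hp.ne'
  have hq' : q ≠ 0 := hq.ne'
  have hD' : q ^ 2 - p ^ 2 ≠ 0 := hD.ne'
  intro x
  have hcs : Real.cosh x ^ 2 - Real.sinh x ^ 2 = 1 := Real.cosh_sq_sub_sinh_sq x
  have hcsp : Real.cosh (p*x) ^ 2 - Real.sinh (p*x) ^ 2 = 1 := Real.cosh_sq_sub_sinh_sq (p*x)
  have hcsq : Real.cosh (q*x) ^ 2 - Real.sinh (q*x) ^ 2 = 1 := Real.cosh_sq_sub_sinh_sq (q*x)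
  refine ⟨?_, ?_, ?_, ?_⟩
  · rw [hz, pformW]
    have key1 : -(b ^ 2) - a ^ 2 + c1 ^ 2 + c2 ^ 2 + c3 ^ 2 = 0 := by
      rw [hc1sq, hc2sq, hc3sq]; field_simp; ring
    linear_combination key1 - a ^ 2 * hcs + c1 ^ 2 * hcsp + c2 ^ 2 * hcsq
  · rw [hz1, pformV]
    have key2 : a ^ 2 - (c1*p) ^ 2 - (c2*q) ^ 2 = -2 := by
      have e1 : (c1*p)^2 = c1^2 * p^2 := by ring
      have e2 : (c2*q)^2 = c2^2 * q^2 := by ring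
      rw [e1, e2, hc1sq, hc2sq]; field_simp; ring
    linear_combination key2 + a ^ 2 * hcs - (c1*p) ^ 2 * hcsp - (c2*q) ^ 2 * hcsq
  · rw [hz2, pformW]
    have key3 : -(a ^ 2) + (c1*p*p) ^ 2 + (c2*q*q) ^ 2 = 4 := by
      have e1 : (c1*p*p)^2 = c1^2 * p^2 * p^2 := by ring
      have e2 : (c2*q*q)^2 = c2^2 * q^2 * q^2 := by ring
      rw [e1, e2, hc1sq, hc2sq]; field_simp; ring
    linear_combination key3 - a ^ 2 * hcs + (c1*p*p) ^ 2 * hcsp + (c2*q*q) ^ 2 * hcsq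
  · rw [hz3, hz1]
    intro h
    have h4 := congrFun h 4
    have hch : 0 < Real.cosh x := Real.cosh_pos x
    simp only [Vf, Pi.smul_apply, smul_eq_mul] at h4
    norm_num [Matrix.cons_val_fin_one, Matrix.cons_val_four, Matrix.tail_cons, Matrix.head_cons] at h4
    nlinarith [h4, hch, ha]
end
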